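/- The projector |0⟩⟨0|_E tensored with the identity on all other factors acts as the identity on every post-measurement state arising from a state of H₅, and annihilates every post-measurement state arising from a state of H₇. (Step 4 of the proof of Theorem 9: Eve's final two-outcome measurement distinguishes the remaining subsets H₅ and H₇.) -/

import Mathlib

noncomputable section

/-- View a coefficient function as a vector of the Euclidean (Hilbert) space. -/
def ofFun {ι : Type*} [Fintype ι] (f : ι → ℂ) : EuclideanSpace ℂ ι := WithLp.toLp 2 f

/-- Transport an endomorphism of the coefficient functions to the Euclidean space. -/
def toE {ι : Type*} [Fintype ι] (T : (ι → ℂ) →ₗ[ℂ] (ι → ℂ)) :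
    Module.End ℂ (EuclideanSpace ℂ ι) :=
  (WithLp.linearEquiv 2 ℂ (ι → ℂ)).symm.toLinearMap ∘ₗ T ∘ₗ
    (WithLp.linearEquiv 2 ℂ (ι → ℂ)).toLinearMap

open Classical in
/-- Diagonal orthogonal projection keeping exactly the basis vectors whose index
satisfies `f`. -/
def diagP {ι : Type*} [Fintype ι] (f : ι → Prop) : Module.End ℂ (EuclideanSpace ℂ ι) :=
  toE (LinearMap.pi fun i => (if f i then (1 : ℂ) else 0) • LinearMap.proj i)

/-- Tensor product of two vectors, realized on the product index set. -/
def tensE {ι κ : Type*} [Fintype ι] [Fintype κ]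
    (u : EuclideanSpace ℂ ι) (w : EuclideanSpace ℂ κ) : EuclideanSpace ℂ (ι × κ) :=
  ofFun fun p => u p.1 * w p.2

/-- The root of unity `ω_n = e^{2πi/n}`. -/
def omegaC (n : ℕ) : ℂ := Complex.exp (2 * Real.pi * Complex.I / n)

/-- Computational basis vector `|k⟩` of `ℂ^d`. -/
def ketD (d k : ℕ) : EuclideanSpace ℂ (Fin d) :=
  ofFun fun u => if (u : ℕ) = k then 1 else 0

/-- The (unnormalized) vector `|α_i⟩ = Σ_{u=0}^{d−1} ω_d^{iu}|u⟩`. -/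
def alphaD (d i : ℕ) : EuclideanSpace ℂ (Fin d) :=
  ofFun fun u => omegaC d ^ (i * (u : ℕ))

/-- The (unnormalized) vector `|γ_m⟩ = Σ_{u=0}^{d−2} ω_{d−1}^{mu}|u+1⟩`. -/
def gammaD (d m : ℕ) : EuclideanSpace ℂ (Fin d) :=
  ofFun fun u => if (u : ℕ) = 0 then 0 else omegaC (d - 1) ^ (m * ((u : ℕ) - 1))

/-- Tensor product of five vectors of `ℂ^d`, realized on the index set `Fin 5 → Fin d`. -/
def tp5 {d : ℕ} (v0 v1 v2 v3 v4 : EuclideanSpace ℂ (Fin d)) :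
    EuclideanSpace ℂ (Fin 5 → Fin d) :=
  ofFun fun x => v0 (x 0) * v1 (x 1) * v2 (x 2) * v3 (x 3) * v4 (x 4)

/-- The states of set (5): family `k : Fin 10` corresponds to `H_{k+1}`; the parameter
`a` is the spectral parameter (`i ∈ ℤ_d` for `H₁,…,H₅`, `m ∈ ℤ_{d−1}` for `H₆,…,H₁₀`),
and `p` is the index of the computational basis vector `|p⟩ ∈ {|1⟩,…,|d−1⟩}`. -/
def stateOf (d : ℕ) (k : Fin 10) (a p : ℕ) : EuclideanSpace ℂ (Fin 5 → Fin d) :=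
  if k = 0 then tp5 (alphaD d a) (alphaD d a) (ketD d p) (ketD d 0) (ketD d 0)
  else if k = 1 then tp5 (alphaD d a) (ketD d p) (ketD d 0) (ketD d 0) (alphaD d a)
  else if k = 2 then tp5 (ketD d p) (ketD d 0) (ketD d 0) (alphaD d a) (alphaD d a)
  else if k = 3 then tp5 (ketD d 0) (ketD d 0) (alphaD d a) (alphaD d a) (ketD d p)
  else if k = 4 then tp5 (ketD d 0) (alphaD d a) (alphaD d a) (ketD d p) (ketD d 0)
  else if k = 5 then tp5 (gammaD d a) (ketD d 0) (ketD d p) (ketD d 0) (ketD d 1)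
  else if k = 6 then tp5 (ketD d 0) (ketD d p) (ketD d 0) (ketD d 1) (gammaD d a)
  else if k = 7 then tp5 (ketD d p) (ketD d 0) (ketD d 1) (gammaD d a) (ketD d 0)
  else if k = 8 then tp5 (ketD d 0) (ketD d 1) (gammaD d a) (ketD d 0) (ketD d p)
  else tp5 (ketD d 1) (gammaD d a) (ketD d 0) (ketD d p) (ketD d 0)

/-- Ranges of the parameters of the states of set (5). -/
def validIdx (d : ℕ) (k : Fin 10) (a p : ℕ) : Prop :=
  (if (k : ℕ) < 5 then a < d else a < d - 1) ∧ 1 ≤ p ∧ p < d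

/-- The full Hilbert space: five `ℂ^d` subsystems `A,B,C,D,E` (positions `0,…,4`),
ancilla qubits `a,b,c` (first `Fin 3 → Fin 2` factor, attached to `A,B,C`),
ancilla qubits `v₁,v₂,v₃` (second factor, held by Dave),
and ancilla qubits `e₁,e₂,e₃` (third factor, held by Eve). -/
abbrev W3 (d : ℕ) : Type :=
  EuclideanSpace ℂ
    ((Fin 5 → Fin d) × ((Fin 3 → Fin 2) × (Fin 3 → Fin 2) × (Fin 3 → Fin 2)))

/-- The ancilla state `|G⟩_{av₁e₁} ⊗ |G⟩_{bv₂e₂} ⊗ |G⟩_{cv₃e₃}`, where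
`|G⟩ = (|000⟩+|111⟩)/√2`. -/
def ancG : EuclideanSpace ℂ ((Fin 3 → Fin 2) × (Fin 3 → Fin 2) × (Fin 3 → Fin 2)) :=
  ofFun fun q =>
    ∏ k : Fin 3,
      (if q.1 k = q.2.1 k ∧ q.2.1 k = q.2.2 k then (Real.sqrt 2 : ℂ)⁻¹ else 0)

/-- The measurement projector
`Q_{Xx} = |0⟩⟨0|_X ⊗ |0⟩⟨0|_x + (Σ_{k=1}^{d−1}|k⟩⟨k|_X) ⊗ |1⟩⟨1|_x`
on the main subsystem at position `X` and its ancilla qubit at position `j`. -/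
def QprojG (d : ℕ) (X : Fin 5) (j : Fin 3) : Module.End ℂ (W3 d) :=
  diagP fun q => ((q.1 X : ℕ) = 0 ∧ q.2.1 j = 0) ∨ ((q.1 X : ℕ) ≠ 0 ∧ q.2.1 j = 1)

/-- The post-measurement state
`(Q_{Aa}Q_{Bb}Q_{Cc})(|h⟩ ⊗ |G⟩_{av₁e₁} ⊗ |G⟩_{bv₂e₂} ⊗ |G⟩_{cv₃e₃})`. -/
def postG (d : ℕ) (h : EuclideanSpace ℂ (Fin 5 → Fin d)) : W3 d :=
  (QprojG d 0 0 * QprojG d 1 1 * QprojG d 2 2) (tensE h ancG)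

/-- The projector `|0⟩⟨0|_E` tensored with the identity on all other factors. -/
def projE0 (d : ℕ) : Module.End ℂ (W3 d) :=
  diagP fun q => (q.1 4 : ℕ) = 0

open Classical in
lemma diagP_apply {ι : Type*} [Fintype ι] (f : ι → Prop) (v : EuclideanSpace ℂ ι) (i : ι) :
    diagP f v i = if f i then v i else 0 := by
  show (if f i then (1:ℂ) else 0) • v i = _
  split_ifs <;> simp

open Classical in
lemma postG_apply (d : ℕ) (h : EuclideanSpace ℂ (Fin 5 → Fin d)) (q) :
    postG d h q =
      if (((q.1 0 : ℕ) = 0 ∧ q.2.1 0 = 0) ∨ ((q.1 0 : ℕ) ≠ 0 ∧ q.2.1 0 = 1)) then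
        if (((q.1 1 : ℕ) = 0 ∧ q.2.1 1 = 0) ∨ ((q.1 1 : ℕ) ≠ 0 ∧ q.2.1 1 = 1)) then
          if (((q.1 2 : ℕ) = 0 ∧ q.2.1 2 = 0) ∨ ((q.1 2 : ℕ) ≠ 0 ∧ q.2.1 2 = 1)) then
            h q.1 * ancG q.2
          else 0
        else 0
      else 0 := by
  show (QprojG d 0 0) ((QprojG d 1 1) ((QprojG d 2 2) (tensE h ancG))) q = _
  rw [QprojG, diagP_apply]
  split_ifs with h1 h2 h3 h2 h3 <;> try rfl
  all_goals rw [QprojG, diagP_apply]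
  all_goals first
    | (rw [if_neg h2])
    | (rw [if_pos h2]; rw [QprojG, diagP_apply];
       first | rw [if_pos h3]; rfl | rw [if_neg h3])

/-- Step 4 of Theorem 9: `|0⟩⟨0|_E ⊗ I` acts as the identity on every
post-measurement state arising from a state of `H₅`, and annihilates every
post-measurement state arising from a state of `H₇`. -/
theorem thm9_step4_eve_final_measurement (d : ℕ) (hd : 3 ≤ d) :
    (∀ a p, validIdx d 4 a p →
      projE0 d (postG d (stateOf d 4 a p)) = postG d (stateOf d 4 a p)) ∧
    (∀ a p, validIdx d 6 a p →
      projE0 d (postG d (stateOf d 6 a p)) = 0) := by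
  constructor
  · intro a p _
    ext q
    rw [projE0, diagP_apply]
    by_cases hE : (q.1 4 : ℕ) = 0
    · rw [if_pos hE]
    · rw [if_neg hE, postG_apply]
      have h0 : stateOf d 4 a p q.1 = 0 := by
        simp [stateOf, tp5, ofFun, ketD, hE]
      rw [h0]
      simp
  · intro a p _
    ext q
    rw [projE0, diagP_apply]
    show _ = (0 : ℂ)
    by_cases hE : (q.1 4 : ℕ) = 0
    · rw [if_pos hE, postG_apply]
      have h0 : stateOf d 6 a p q.1 = 0 := by
        simp [stateOf, tp5, ofFun, gammaD, hE]
      rw [h0]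
      simp
    · rw [if_neg hE]
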